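/- Let f be continuous on [0,δ], with f(0) = 0, thrice differentiable on (0,δ], and f''' strictly increasing on (0,δ]. Then the δ-smoothing g satisfies f(w) < g(w) for all w ∈ (0,δ), provided f ≠ g on (0,δ). -/

import Mathlib

open Set

lemma key (h h1 h2 h3 : ℝ → ℝ) (δ : ℝ) (hδ : 0 < δ)
    (hc : ContinuousOn h (Set.Icc 0 δ))
    (hd1 : ∀ x ∈ Set.Ioc (0:ℝ) δ, HasDerivAt h (h1 x) x)
    (hd2 : ∀ x ∈ Set.Ioc (0:ℝ) δ, HasDerivAt h1 (h2 x) x)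
    (hd3 : ∀ x ∈ Set.Ioc (0:ℝ) δ, HasDerivAt h2 (h3 x) x)
    (h00 : h 0 = 0) (hhδ : h δ = 0) (h1δ : h1 δ = 0) (h2δ : h2 δ = 0)
    (hmono : StrictMonoOn h3 (Set.Ioc 0 δ)) :
    ∀ w ∈ Set.Ioo (0:ℝ) δ, h w < 0 := by
  -- continuity facts
  have hsub : ∀ {x : ℝ}, 0 < x → Set.Icc x δ ⊆ Set.Ioc 0 δ := by
    intro x hx y hy; exact ⟨lt_of_lt_of_le hx hy.1, hy.2⟩
  have hc1 : ∀ {x : ℝ}, 0 < x → ContinuousOn h1 (Set.Icc x δ) := by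
    intro x hx t ht
    exact ((hd2 t (hsub hx ht)).differentiableAt.continuousAt).continuousWithinAt
  have hc2 : ∀ {x : ℝ}, 0 < x → ContinuousOn h2 (Set.Icc x δ) := by
    intro x hx t ht
    exact ((hd3 t (hsub hx ht)).differentiableAt.continuousAt).continuousWithinAt
  -- N = {h2 < 0} is upward closed in (0,δ)
  have Nup : ∀ x ∈ Set.Ioo (0:ℝ) δ, h2 x < 0 → ∀ y ∈ Set.Ioo x δ, h2 y < 0 := by
    intro x hx hneg y hy
    have hconv : StrictConvexOn ℝ (Set.Icc x δ) h2 := by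
      apply StrictMonoOn.strictConvexOn_of_deriv (convex_Icc x δ) (hc2 hx.1)
      rw [interior_Icc]
      intro u hu v hv huv
      have hu' : u ∈ Set.Ioc (0:ℝ) δ := ⟨hx.1.trans hu.1, hu.2.le⟩
      have hv' : v ∈ Set.Ioc (0:ℝ) δ := ⟨hx.1.trans hv.1, hv.2.le⟩
      rw [(hd3 u hu').deriv, (hd3 v hv').deriv]
      exact hmono hu' hv' huv
    have hxδ : x < δ := hx.2
    set a : ℝ := (δ - y) / (δ - x) with ha
    set b : ℝ := (y - x) / (δ - x) with hb
    have hdx : (0:ℝ) < δ - x := by linarith [hy.2, hy.1]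
    have hap : 0 < a := div_pos (by linarith [hy.2]) hdx
    have hbp : 0 < b := div_pos (by linarith [hy.1]) hdx
    have hab : a + b = 1 := by
      rw [ha, hb, ← add_div, div_eq_one_iff_eq hdx.ne']; ring
    have hy' : a • x + b • δ = y := by
      rw [ha, hb, smul_eq_mul, smul_eq_mul, div_mul_eq_mul_div, div_mul_eq_mul_div, ← add_div,
        div_eq_iff hdx.ne']; ring
    have := hconv.2 (Set.left_mem_Icc.2 hxδ.le) (Set.right_mem_Icc.2 hxδ.le)
      (ne_of_lt hxδ) hap hbp hab
    rw [hy'] at this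
    have : h2 y < a * h2 x + b * h2 δ := this
    rw [h2δ] at this
    nlinarith
  -- (1) : h2 x < 0 → h1 x > 0
  have P1 : ∀ x ∈ Set.Ioo (0:ℝ) δ, h2 x < 0 → 0 < h1 x := by
    intro x hx hneg
    have hanti : StrictAntiOn h1 (Set.Icc x δ) := by
      apply strictAntiOn_of_deriv_neg (convex_Icc x δ) (hc1 hx.1)
      rw [interior_Icc]
      intro t ht
      rw [(hd2 t ⟨hx.1.trans ht.1, ht.2.le⟩).deriv]
      exact Nup x hx hneg t ht
    have := hanti (Set.left_mem_Icc.2 hx.2.le) (Set.right_mem_Icc.2 hx.2.le) hx.2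
    rw [h1δ] at this; exact this
  -- (2) : h1 propagates positivity rightwards
  have P2 : ∀ x ∈ Set.Ioo (0:ℝ) δ, 0 < h1 x → ∀ y, x ≤ y → y < δ → 0 < h1 y := by
    intro x hx hpos y hxy hyδ
    rcases eq_or_lt_of_le hxy with rfl | hxy
    · exact hpos
    have hy : y ∈ Set.Ioo (0:ℝ) δ := ⟨hx.1.trans hxy, hyδ⟩
    rcases lt_or_ge (h2 y) 0 with hneg | hnn
    · exact P1 y hy hneg
    · -- h2 ≥ 0 on (x,y), so h1 monotone on [x,y]
      have hmon : MonotoneOn h1 (Set.Icc x y) := by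
        apply monotoneOn_of_deriv_nonneg (convex_Icc x y)
        · exact fun t ht => ((hd2 t ⟨hx.1.trans_le ht.1, ht.2.trans hyδ.le⟩).differentiableAt.continuousAt).continuousWithinAt
        · rw [interior_Icc]
          intro t ht
          exact ((hd2 t ⟨hx.1.trans ht.1, (ht.2.trans hyδ).le⟩).differentiableAt).differentiableWithinAt
        · rw [interior_Icc]
          intro t ht
          rw [(hd2 t ⟨hx.1.trans ht.1, (ht.2.trans hyδ).le⟩).deriv]
          by_contra hlt
          push_neg at hlt
          have := Nup t ⟨hx.1.trans ht.1, ht.2.trans hyδ⟩ hlt y ⟨ht.2, hyδ⟩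
          linarith
      have := hmon (Set.left_mem_Icc.2 hxy.le) (Set.right_mem_Icc.2 hxy.le) hxy.le
      linarith
  -- main argument
  intro w hw
  rcases lt_or_ge 0 (h1 w) with hpos | hnp
  · -- h strictly increasing on [w,δ], h δ = 0
    have hmon : StrictMonoOn h (Set.Icc w δ) := by
      apply strictMonoOn_of_deriv_pos (convex_Icc w δ)
      · exact hc.mono (Set.Icc_subset_Icc hw.1.le le_rfl)
      · rw [interior_Icc]
        intro t ht
        rw [(hd1 t ⟨hw.1.trans ht.1, ht.2.le⟩).deriv]
        exact P2 w hw hpos t ht.1.le ht.2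
    have := hmon (Set.left_mem_Icc.2 hw.2.le) (Set.right_mem_Icc.2 hw.2.le) hw.2
    rw [hhδ] at this; exact this
  · -- h1 ≤ 0 on (0,w]
    have h1np : ∀ t ∈ Set.Ioo (0:ℝ) w, h1 t ≤ 0 := by
      intro t ht
      by_contra hpos
      push_neg at hpos
      have := P2 t ⟨ht.1, ht.2.trans hw.2⟩ hpos w ht.2.le hw.2
      linarith
    have hant : AntitoneOn h (Set.Icc 0 w) := by
      apply antitoneOn_of_deriv_nonpos (convex_Icc 0 w)
      · exact hc.mono (Set.Icc_subset_Icc le_rfl hw.2.le)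
      · rw [interior_Icc]
        intro t ht
        exact ((hd1 t ⟨ht.1, ht.2.le.trans hw.2.le⟩).differentiableAt).differentiableWithinAt
      · rw [interior_Icc]
        intro t ht
        rw [(hd1 t ⟨ht.1, ht.2.le.trans hw.2.le⟩).deriv]
        exact h1np t ht
    have hle : h w ≤ 0 := by
      have := hant (Set.left_mem_Icc.2 hw.1.le) (Set.right_mem_Icc.2 hw.1.le) hw.1.le
      rw [h00] at this; exact this
    rcases lt_or_eq_of_le hle with hlt | heq
    · exact hlt
    · -- h ≡ 0 on [0,w]; derive contradiction with strict monotonicity of h3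
      exfalso
      have hzero : ∀ t ∈ Set.Icc (0:ℝ) w, h t = 0 := by
        intro t ht
        have hle1 := hant (Set.left_mem_Icc.2 hw.1.le) ht ht.1
        have hle2 := hant ht (Set.right_mem_Icc.2 hw.1.le) ht.2
        rw [h00] at hle1; rw [heq] at hle2
        linarith
      have hz1 : ∀ t ∈ Set.Ioo (0:ℝ) w, h1 t = 0 := by
        intro t ht
        have heq' : h =ᶠ[nhds t] (fun _ => (0:ℝ)) := by
          filter_upwards [Ioo_mem_nhds ht.1 ht.2] with u hu
          exact hzero u ⟨hu.1.le, hu.2.le⟩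
        have := (hd1 t ⟨ht.1, ht.2.le.trans hw.2.le⟩).deriv
        rw [← this, heq'.deriv_eq, deriv_const]
      have hz2 : ∀ t ∈ Set.Ioo (0:ℝ) w, h2 t = 0 := by
        intro t ht
        have heq' : h1 =ᶠ[nhds t] (fun _ => (0:ℝ)) := by
          filter_upwards [Ioo_mem_nhds ht.1 ht.2] with u hu
          exact hz1 u hu
        have := (hd2 t ⟨ht.1, ht.2.le.trans hw.2.le⟩).deriv
        rw [← this, heq'.deriv_eq, deriv_const]
      have hz3 : ∀ t ∈ Set.Ioo (0:ℝ) w, h3 t = 0 := by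
        intro t ht
        have heq' : h2 =ᶠ[nhds t] (fun _ => (0:ℝ)) := by
          filter_upwards [Ioo_mem_nhds ht.1 ht.2] with u hu
          exact hz2 u hu
        have := (hd3 t ⟨ht.1, ht.2.le.trans hw.2.le⟩).deriv
        rw [← this, heq'.deriv_eq, deriv_const]
      have hu : (w/3 : ℝ) ∈ Set.Ioo (0:ℝ) w := ⟨by linarith [hw.1], by linarith [hw.1]⟩
      have hv : (w/2 : ℝ) ∈ Set.Ioo (0:ℝ) w := ⟨by linarith [hw.1], by linarith [hw.1]⟩
      have := hmono ⟨hu.1, hu.2.le.trans hw.2.le⟩ ⟨hv.1, hv.2.le.trans hw.2.le⟩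
        (by linarith [hw.1])
      rw [hz3 _ hu, hz3 _ hv] at this
      exact lt_irrefl 0 this
lemma cubic_hasDerivAt (a b c x : ℝ) :
    HasDerivAt (fun w => a * w + b * w ^ 2 + c * w ^ 3)
      (a + 2 * b * x + 3 * c * x ^ 2) x := by
  have h1 : HasDerivAt (fun w : ℝ => a * w) (a * 1) x := (hasDerivAt_id x).const_mul a
  have h2 : HasDerivAt (fun w : ℝ => b * w ^ 2) (b * (2 * x ^ 1)) x :=
    (hasDerivAt_pow 2 x).const_mul b
  have h3 : HasDerivAt (fun w : ℝ => c * w ^ 3) (c * (3 * x ^ 2)) x :=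
    (hasDerivAt_pow 3 x).const_mul c
  have := (h1.add h2).add h3
  exact this.congr_deriv (by ring)

lemma quad_hasDerivAt (a b c x : ℝ) :
    HasDerivAt (fun w => a + 2 * b * w + 3 * c * w ^ 2)
      (2 * b + 6 * c * x) x := by
  have h1 : HasDerivAt (fun _ : ℝ => a) 0 x := hasDerivAt_const x a
  have h2 : HasDerivAt (fun w : ℝ => 2 * b * w) (2 * b * 1) x :=
    (hasDerivAt_id x).const_mul (2 * b)
  have h3 : HasDerivAt (fun w : ℝ => 3 * c * w ^ 2) (3 * c * (2 * x ^ 1)) x :=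
    (hasDerivAt_pow 2 x).const_mul (3 * c)
  have := (h1.add h2).add h3
  exact this.congr_deriv (by ring)

lemma lin_hasDerivAt (b c x : ℝ) :
    HasDerivAt (fun w => 2 * b + 6 * c * w) (6 * c) x := by
  have h1 : HasDerivAt (fun _ : ℝ => 2 * b) 0 x := hasDerivAt_const x (2 * b)
  have h2 : HasDerivAt (fun w : ℝ => 6 * c * w) (6 * c * 1) x :=
    (hasDerivAt_id x).const_mul (6 * c)
  have := h1.add h2
  exact this.congr_deriv (by ring)

theorem stmt_13 (f : ℝ → ℝ) (δ : ℝ) (hδ : 0 < δ) (hf0 : f 0 = 0)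
    (hcont : ContinuousOn f (Set.Icc 0 δ))
    (hdiff : ∀ w ∈ Set.Ioc (0:ℝ) δ, DifferentiableAt ℝ f w ∧
      DifferentiableAt ℝ (deriv f) w ∧ DifferentiableAt ℝ (deriv (deriv f)) w)
    (hanti : StrictMonoOn (deriv (deriv (deriv f))) (Set.Ioc 0 δ))
    (g : ℝ → ℝ)
    (hg : g = fun w =>
      (3 * f δ / δ - 2 * deriv f δ + δ * deriv (deriv f) δ / 2) * w +
      (-6 * f δ / δ ^ 2 + 6 * deriv f δ / δ - 2 * deriv (deriv f) δ) / 2 * w ^ 2 +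
      (6 * f δ / δ ^ 3 - 6 * deriv f δ / δ ^ 2 + 3 * deriv (deriv f) δ / δ) / 6 * w ^ 3)
    (hne : ∃ w ∈ Set.Ioo (0:ℝ) δ, f w ≠ g w) :
    ∀ w ∈ Set.Ioo (0:ℝ) δ, f w < g w := by
  clear hne
  set A : ℝ := 3 * f δ / δ - 2 * deriv f δ + δ * deriv (deriv f) δ / 2 with hA
  set B : ℝ := (-6 * f δ / δ ^ 2 + 6 * deriv f δ / δ - 2 * deriv (deriv f) δ) / 2 with hB
  set C : ℝ := (6 * f δ / δ ^ 3 - 6 * deriv f δ / δ ^ 2 + 3 * deriv (deriv f) δ / δ) / 6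
    with hC
  have hδne : δ ≠ 0 := ne_of_gt hδ
  have key := key (fun w => f w - g w)
    (fun w => deriv f w - (A + 2 * B * w + 3 * C * w ^ 2))
    (fun w => deriv (deriv f) w - (2 * B + 6 * C * w))
    (fun w => deriv (deriv (deriv f)) w - 6 * C) δ hδ
    ?_ ?_ ?_ ?_ ?_ ?_ ?_ ?_ ?_
  · intro w hw
    exact sub_neg.mp (key w hw)
  · -- continuity of f - g
    apply hcont.sub
    rw [hg]
    apply Continuous.continuousOn
    fun_prop
  · intro x hx
    have hf := (hdiff x hx).1.hasDerivAt
    have hgd : HasDerivAt g (A + 2 * B * x + 3 * C * x ^ 2) x := by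
      rw [hg]; exact cubic_hasDerivAt A B C x
    exact hf.sub hgd
  · intro x hx
    have hf := (hdiff x hx).2.1.hasDerivAt
    have hgd := quad_hasDerivAt A B C x
    exact hf.sub hgd
  · intro x hx
    have hf := (hdiff x hx).2.2.hasDerivAt
    have hgd := lin_hasDerivAt B C x
    exact hf.sub hgd
  · simp [hg, hf0]
  · rw [hg]
    simp only
    rw [hA, hB, hC]
    field_simp
    ring
  · rw [hA, hB, hC]
    field_simp
    ring
  · rw [hB, hC]
    field_simp
    ring
  · intro u hu v hv huv
    have := hanti hu hv huv
    simpa using sub_lt_sub_right this (6 * C)
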